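/- Let n ≥ 2 and let G be a simple graph on the vertex set {0,1,…,n−1} without isolated vertices. Let P be the path graph on {0,1,…,n−1} with edges {j, j+1} for 0 ≤ j ≤ n−2. Then G has a Hamiltonian path (an ordering v_0, v_1, …, v_{n−1} of all vertices such that v_j and v_{j+1} are adjacent in G for every 0 ≤ j ≤ n−2) if and only if F_G isomorphically implies F_P. -/

import Mathlib

/-- For `n ≥ 2`, a graph `G` on `Fin n` without isolated vertices, and the
path graph `P` on `Fin n` (edges `{j, j+1}`): `G` has a Hamiltonian path iff
`F_G ⇒̃ F_P`. -/
theorem stmt_17 (n : ℕ) (hn : 2 ≤ n) (G P : SimpleGraph (Fin n))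
    (hGiso : ∀ v : Fin n, ∃ w : Fin n, G.Adj v w)
    (hP : ∀ u v : Fin n, P.Adj u v ↔ ((u : ℕ) + 1 = (v : ℕ) ∨ (v : ℕ) + 1 = (u : ℕ)))
    (FG FP : (Fin n → Bool) → Bool)
    (hFG : ∀ a : Fin n → Bool, FG a = true ↔
      ∀ i j : Fin n, G.Adj i j → (a i = true ∨ a j = true))
    (hFP : ∀ a : Fin n → Bool, FP a = true ↔
      ∀ i j : Fin n, P.Adj i j → (a i = true ∨ a j = true)) :
    (∃ e : Equiv.Perm (Fin n), ∀ j : Fin n, ∀ hj : (j : ℕ) + 1 < n,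
        G.Adj (e j) (e ⟨(j : ℕ) + 1, hj⟩)) ↔
      (∃ π : Equiv.Perm (Fin n), ∀ a : Fin n → Bool, FG (a ∘ π) = true → FP a = true) := by
  constructor
  · rintro ⟨e, he⟩
    refine ⟨e⁻¹, fun a ha => ?_⟩
    rw [hFP]
    rw [hFG] at ha
    intro i j hij
    rw [hP] at hij
    rcases hij with h | h
    · have hj : (i : ℕ) + 1 < n := h ▸ j.isLt
      have hji : j = ⟨(i : ℕ) + 1, hj⟩ := Fin.ext h.symm
      subst hji
      have := ha _ _ (he i hj)
      simpa using this
    · have hi : (j : ℕ) + 1 < n := h ▸ i.isLt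
      have hij : i = ⟨(j : ℕ) + 1, hi⟩ := Fin.ext h.symm
      subst hij
      have := ha _ _ (he j hi)
      simpa using this.symm
  · rintro ⟨π, hπ⟩
    refine ⟨π.symm, fun j hj => ?_⟩
    by_contra hadj
    set j' : Fin n := ⟨(j : ℕ) + 1, hj⟩ with hj'
    set a : Fin n → Bool := fun i => if i = j ∨ i = j' then false else true with ha
    have hFGtrue : FG (a ∘ π) = true := by
      rw [hFG]
      intro i k hik
      by_contra hcon
      push_neg at hcon
      obtain ⟨h1, h2⟩ := hcon
      have e1 : π i = j ∨ π i = j' := by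
        by_contra hc
        exact h1 (by simp only [ha, Function.comp_apply]; rw [if_neg hc])
      have e2 : π k = j ∨ π k = j' := by
        by_contra hc
        exact h2 (by simp only [ha, Function.comp_apply]; rw [if_neg hc])
      have hne : i ≠ k := hik.ne
      rcases e1 with e1 | e1 <;> rcases e2 with e2 | e2
      · exact hne (π.injective (e1.trans e2.symm))
      · have : i = π.symm j := by rw [← e1]; simp
        have hk : k = π.symm j' := by rw [← e2]; simp
        exact hadj (this ▸ hk ▸ hik)
      · have : i = π.symm j' := by rw [← e1]; simp
        have hk : k = π.symm j := by rw [← e2]; simp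
        exact hadj (G.adj_symm (this ▸ hk ▸ hik))
      · exact hne (π.injective (e1.trans e2.symm))
    have hFPtrue := hπ a hFGtrue
    rw [hFP] at hFPtrue
    have hadjP : P.Adj j j' := by
      rw [hP]
      left; simp [hj']
    have := hFPtrue j j' hadjP
    simp [ha] at this
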